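/- Let P be a probability measure on a finite set and ρ > 0. For any bounded function Z, sup{E_Q[Z] : D_f(Q‖P) ≤ ρ} = inf_{λ ≥ 0, η ∈ ℝ} { λ E_P[f*((Z − η)/λ)] + λρ + η }, where f* is the Fenchel conjugate of f (with the convention λ f*(s/λ) interpreted as its limit as λ ↓ 0). -/

import Mathlib

open Finset

private lemma aux_delta {A B K : ℝ} (h : ∀ δ : ℝ, 0 < δ → δ ≤ 1 → A + δ * B < K) : A ≤ K := by
  refine le_of_forall_pos_le_add fun ε hε => ?_
  have hd1 : (0:ℝ) < min 1 (ε / (|B| + 1)) := lt_min one_pos (by positivity)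
  have h2 := h _ hd1 (min_le_left _ _)
  have h3 : |min 1 (ε / (|B| + 1)) * B| ≤ ε := by
    rw [abs_mul, abs_of_pos hd1]
    calc min 1 (ε / (|B| + 1)) * |B| ≤ (ε / (|B| + 1)) * |B| :=
          mul_le_mul_of_nonneg_right (min_le_right _ _) (abs_nonneg _)
      _ ≤ ε := by
          rw [div_mul_eq_mul_div, div_le_iff₀ (by positivity)]
          nlinarith [abs_nonneg B]
  have h4 := neg_le_abs (min 1 (ε / (|B| + 1)) * B)
  linarith

set_option maxHeartbeats 1600000 in
/-- General duality for the worst-case risk on a finite probability space: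
sup{E_Q[Z] : D_f(Q‖P) ≤ ρ} = inf_{λ > 0, η} { λ E_P[f*((Z−η)/λ)] + λρ + η },
where f* is the Fenchel conjugate of f (the value at λ = 0 is by convention the
limit as λ ↓ 0, so the infimum over λ ≥ 0 equals the infimum over λ > 0).
The conjugate is given as a function g satisfying the defining least-upper-bound
property (the supremum is over t ≥ 0 since f = +∞ on t < 0). -/
theorem f_divergence_duality {α : Type*} [Fintype α] (p : α → ℝ)
    (hp : ∀ x, 0 < p x) (hp1 : ∑ x, p x = 1)
    (f g : ℝ → ℝ) (hf : ConvexOn ℝ (Set.Ici 0) f) (hf1 : f 1 = 0)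
    (hg : ∀ s : ℝ, IsLUB {y : ℝ | ∃ t : ℝ, 0 ≤ t ∧ y = s * t - f t} (g s))
    (Z : α → ℝ) (ρ : ℝ) (hρ : 0 < ρ) :
    sSup {r : ℝ | ∃ q : α → ℝ, (∀ x, 0 ≤ q x) ∧ (∑ x, q x) = 1 ∧
        (∑ x, p x * f (q x / p x)) ≤ ρ ∧ r = ∑ x, q x * Z x} =
      sInf {r : ℝ | ∃ lam η : ℝ, 0 < lam ∧
        r = lam * (∑ x, p x * g ((Z x - η) / lam)) + lam * ρ + η} := by
  classical
  have hne : Nonempty α := by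
    by_contra h
    rw [not_nonempty_iff] at h
    rw [Finset.univ_eq_empty, Finset.sum_empty] at hp1
    exact one_ne_zero hp1.symm
  have huniv : (Finset.univ : Finset α).Nonempty := Finset.univ_nonempty
  set Pset := {r : ℝ | ∃ q : α → ℝ, (∀ x, 0 ≤ q x) ∧ (∑ x, q x) = 1 ∧
      (∑ x, p x * f (q x / p x)) ≤ ρ ∧ r = ∑ x, q x * Z x} with hPset
  set Dset := {r : ℝ | ∃ lam η : ℝ, 0 < lam ∧
      r = lam * (∑ x, p x * g ((Z x - η) / lam)) + lam * ρ + η} with hDset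
  -- facts about g
  have hub : ∀ s t : ℝ, 0 ≤ t → s * t - f t ≤ g s := fun s t ht => (hg s).1 ⟨t, ht, rfl⟩
  have hg0 : 0 ≤ g 0 := by
    have := hub 0 1 zero_le_one
    simpa [hf1] using this
  have hgmono : ∀ s₁ s₂ : ℝ, s₁ ≤ s₂ → g s₁ ≤ g s₂ := by
    intro s₁ s₂ h
    refine (hg s₁).2 fun y hy => ?_
    obtain ⟨t, ht, rfl⟩ := hy
    calc s₁ * t - f t ≤ s₂ * t - f t := by nlinarith
      _ ≤ g s₂ := hub s₂ t ht
  -- E_p Z is a primal value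
  have hpP : (∑ x, p x * Z x) ∈ Pset := by
    refine ⟨p, fun x => (hp x).le, hp1, ?_, rfl⟩
    have h0 : ∀ x ∈ univ, p x * f (p x / p x) = 0 := fun x _ => by
      rw [div_self (hp x).ne', hf1, mul_zero]
    calc (∑ x, p x * f (p x / p x)) = ∑ _x : α, (0:ℝ) := Finset.sum_congr rfl h0
      _ = 0 := Finset.sum_const_zero
      _ ≤ ρ := hρ.le
  have hPne : Pset.Nonempty := ⟨_, hpP⟩
  -- weak duality
  have hweak : ∀ r ∈ Pset, ∀ d ∈ Dset, r ≤ d := by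
    rintro r ⟨q, hq0, hq1, hqD, rfl⟩ d ⟨lam, eta, hlam, rfl⟩
    have hterm : ∀ x ∈ univ, q x * Z x ≤
        lam * (p x * g ((Z x - eta) / lam)) + lam * (p x * f (q x / p x)) + eta * q x := by
      intro x _
      have h1 := hub ((Z x - eta) / lam) (q x / p x) (div_nonneg (hq0 x) (hp x).le)
      have h3 := mul_le_mul_of_nonneg_left h1 (mul_nonneg hlam.le (hp x).le)
      have h4 : lam * p x * ((Z x - eta) / lam * (q x / p x) - f (q x / p x)) =
          q x * Z x - eta * q x - lam * (p x * f (q x / p x)) := by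
        field_simp [hlam.ne', (hp x).ne']
      rw [h4] at h3
      have h5 : lam * p x * g ((Z x - eta) / lam) = lam * (p x * g ((Z x - eta) / lam)) :=
        mul_assoc _ _ _
      linarith
    have hsum := Finset.sum_le_sum hterm
    have hexp : (∑ x, (lam * (p x * g ((Z x - eta) / lam)) + lam * (p x * f (q x / p x))
          + eta * q x))
        = lam * (∑ x, p x * g ((Z x - eta) / lam)) + lam * (∑ x, p x * f (q x / p x))
          + eta * (∑ x, q x) := by
      rw [Finset.sum_add_distrib, Finset.sum_add_distrib, ← Finset.mul_sum, ← Finset.mul_sum,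
        ← Finset.mul_sum]
    rw [hexp, hq1] at hsum
    have h6 := mul_le_mul_of_nonneg_left hqD hlam.le
    linarith
  have hPbdd : BddAbove Pset := by
    refine ⟨∑ x, |Z x|, ?_⟩
    rintro r ⟨q, hq0, hq1, -, rfl⟩
    refine Finset.sum_le_sum fun x _ => ?_
    have hqx1 : q x ≤ 1 := by
      rw [← hq1]
      exact Finset.single_le_sum (fun i _ => hq0 i) (mem_univ x)
    calc q x * Z x ≤ q x * |Z x| := mul_le_mul_of_nonneg_left (le_abs_self _) (hq0 x)
      _ ≤ 1 * |Z x| := mul_le_mul_of_nonneg_right hqx1 (abs_nonneg _)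
      _ = |Z x| := one_mul _
  have hDne : Dset.Nonempty :=
    ⟨1 * (∑ x, p x * g ((Z x - 0) / 1)) + 1 * ρ + 0, 1, 0, one_pos, rfl⟩
  have hDbdd : BddBelow Dset := ⟨∑ x, p x * Z x, fun d hd => hweak _ hpP d hd⟩
  set V := sSup Pset with hV
  -- continuity of f on the open half line
  have hfc : ContinuousOn f (Set.Ioi (0:ℝ)) := by
    have h := hf.continuousOn_interior
    rwa [interior_Ici] at h
  -- strong duality: for every ε > 0 there is a dual value below V + ε
  have key : ∀ ε : ℝ, 0 < ε → ∃ d ∈ Dset, d ≤ V + ε := by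
    intro ε hε
    set Bh : Set (ℝ × ℝ × ℝ) := {x | ∃ t : α → ℝ, (∀ i, 0 < t i) ∧
        (∑ i, p i * f (t i)) < x.1 ∧ x.2.2 < (∑ i, p i * t i * Z i) ∧
        (∑ i, p i * t i) = x.2.1} with hBh
    -- openness
    have hopen : IsOpen Bh := by
      have hcover : Bh = ⋃ (t : α → ℝ) (_ : ∀ i, 0 < t i),
          {x : ℝ × ℝ × ℝ | 0 < x.2.1 ∧
            (∑ i, p i * f (x.2.1 * t i / (∑ j, p j * t j))) < x.1 ∧
            x.2.2 < x.2.1 * ((∑ i, p i * t i * Z i) / (∑ j, p j * t j))} := by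
        ext x
        obtain ⟨u, w, v⟩ := x
        simp only [hBh, Set.mem_setOf_eq, Set.mem_iUnion]
        constructor
        · rintro ⟨t, ht, h1, h2, h3⟩
          have hw0 : 0 < ∑ j, p j * t j :=
            Finset.sum_pos (fun i _ => mul_pos (hp i) (ht i)) huniv
          refine ⟨t, ht, by rw [← h3]; exact hw0, ?_, ?_⟩
          · have he : ∀ i ∈ univ, p i * f (w * t i / (∑ j, p j * t j)) = p i * f (t i) := by
              intro i _
              congr 2
              rw [← h3, mul_comm, mul_div_assoc, div_self hw0.ne', mul_one]
            rw [Finset.sum_congr rfl he]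
            exact h1
          · rw [← h3, mul_comm, div_mul_cancel₀ _ hw0.ne']
            exact h2
        · rintro ⟨t, ht, hw, h1, h2⟩
          have hw0 : 0 < ∑ j, p j * t j :=
            Finset.sum_pos (fun i _ => mul_pos (hp i) (ht i)) huniv
          refine ⟨fun i => w * t i / (∑ j, p j * t j),
            fun i => div_pos (mul_pos hw (ht i)) hw0, h1, ?_, ?_⟩
          · have he : ∀ i ∈ univ, p i * (w * t i / (∑ j, p j * t j)) * Z i
                = (w / (∑ j, p j * t j)) * (p i * t i * Z i) := fun i _ => by ring
            rw [Finset.sum_congr rfl he, ← Finset.mul_sum]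
            calc v < w * ((∑ i, p i * t i * Z i) / (∑ j, p j * t j)) := h2
              _ = w / (∑ j, p j * t j) * (∑ i, p i * t i * Z i) := by ring
          · have he : ∀ i ∈ univ, p i * (w * t i / (∑ j, p j * t j))
                = (w / (∑ j, p j * t j)) * (p i * t i) := fun i _ => by ring
            rw [Finset.sum_congr rfl he, ← Finset.mul_sum, div_mul_cancel₀ _ hw0.ne']
      rw [hcover]
      refine isOpen_iUnion fun t => isOpen_iUnion fun ht => ?_
      have hw0 : 0 < ∑ j, p j * t j :=
        Finset.sum_pos (fun i _ => mul_pos (hp i) (ht i)) huniv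
      have hUopen : IsOpen {x : ℝ × ℝ × ℝ | 0 < x.2.1} :=
        isOpen_lt continuous_const (continuous_fst.comp continuous_snd)
      have hFcont : ContinuousOn
          (fun x : ℝ × ℝ × ℝ => ∑ i, p i * f (x.2.1 * t i / (∑ j, p j * t j)))
          {x : ℝ × ℝ × ℝ | 0 < x.2.1} := by
        refine continuousOn_finset_sum _ fun i _ => ?_
        refine continuousOn_const.mul (hfc.comp ?_ ?_)
        · exact (((continuous_fst.comp continuous_snd).mul continuous_const).div_const
            _).continuousOn
        · intro x hx
          have hx' : 0 < x.2.1 := hx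
          exact Set.mem_Ioi.mpr (div_pos (mul_pos hx' (ht i)) hw0)
      have hΦ : ContinuousOn (fun x : ℝ × ℝ × ℝ =>
          ((x.1 - ∑ i, p i * f (x.2.1 * t i / (∑ j, p j * t j)),
            x.2.1 * ((∑ i, p i * t i * Z i) / (∑ j, p j * t j)) - x.2.2) : ℝ × ℝ))
          {x : ℝ × ℝ × ℝ | 0 < x.2.1} := by
        refine ContinuousOn.prodMk (continuous_fst.continuousOn.sub hFcont) ?_
        exact (((continuous_fst.comp continuous_snd).mul continuous_const).sub
          (continuous_snd.comp continuous_snd)).continuousOn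
      have heq : {x : ℝ × ℝ × ℝ | 0 < x.2.1 ∧
            (∑ i, p i * f (x.2.1 * t i / (∑ j, p j * t j))) < x.1 ∧
            x.2.2 < x.2.1 * ((∑ i, p i * t i * Z i) / (∑ j, p j * t j))}
          = {x : ℝ × ℝ × ℝ | 0 < x.2.1} ∩ (fun x : ℝ × ℝ × ℝ =>
            ((x.1 - ∑ i, p i * f (x.2.1 * t i / (∑ j, p j * t j)),
              x.2.1 * ((∑ i, p i * t i * Z i) / (∑ j, p j * t j)) - x.2.2) : ℝ × ℝ)) ⁻¹'
            (Set.Ioi 0 ×ˢ Set.Ioi 0) := by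
        ext x
        simp only [Set.mem_setOf_eq, Set.mem_inter_iff, Set.mem_preimage, Set.mem_prod,
          Set.mem_Ioi, sub_pos]
      rw [heq]
      exact hΦ.isOpen_inter_preimage hUopen (isOpen_Ioi.prod isOpen_Ioi)
    -- convexity
    have hconv : Convex ℝ Bh := by
      rintro x ⟨t₁, ht₁, hu₁, hv₁, hw₁⟩ y ⟨t₂, ht₂, hu₂, hv₂, hw₂⟩ μ ν hμ hν hμν
      rcases eq_or_lt_of_le hμ with hμ0 | hμ0
      · obtain rfl : μ = 0 := hμ0.symm
        have hν1 : ν = 1 := by linarith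
        subst hν1
        simpa using ⟨t₂, ht₂, hu₂, hv₂, hw₂⟩
      · refine ⟨fun i => μ * t₁ i + ν * t₂ i,
          fun i => add_pos_of_pos_of_nonneg (mul_pos hμ0 (ht₁ i))
            (mul_nonneg hν (ht₂ i).le), ?_, ?_, ?_⟩
        · have hterm : ∀ i ∈ univ, p i * f (μ * t₁ i + ν * t₂ i)
              ≤ p i * (μ * f (t₁ i) + ν * f (t₂ i)) := by
            intro i _
            have hcvx := hf.2 (Set.mem_Ici.mpr (ht₁ i).le) (Set.mem_Ici.mpr (ht₂ i).le) hμ hν hμν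
            simp only [smul_eq_mul] at hcvx
            exact mul_le_mul_of_nonneg_left hcvx (hp i).le
          have hsplit : (∑ i, p i * (μ * f (t₁ i) + ν * f (t₂ i)))
              = μ * (∑ i, p i * f (t₁ i)) + ν * (∑ i, p i * f (t₂ i)) := by
            rw [Finset.sum_congr rfl (fun i _ => by ring :
              ∀ i ∈ univ, p i * (μ * f (t₁ i) + ν * f (t₂ i))
                = μ * (p i * f (t₁ i)) + ν * (p i * f (t₂ i))),
              Finset.sum_add_distrib, ← Finset.mul_sum, ← Finset.mul_sum]
          have hfst : (μ • x + ν • y).1 = μ * x.1 + ν * y.1 := by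
            simp [Prod.smul_fst, smul_eq_mul]
          calc (∑ i, p i * f (μ * t₁ i + ν * t₂ i))
              ≤ ∑ i, p i * (μ * f (t₁ i) + ν * f (t₂ i)) := Finset.sum_le_sum hterm
            _ = μ * (∑ i, p i * f (t₁ i)) + ν * (∑ i, p i * f (t₂ i)) := hsplit
            _ < (μ • x + ν • y).1 := by
                rw [hfst]
                have ha1 := mul_lt_mul_of_pos_left hu₁ hμ0
                have ha2 := mul_le_mul_of_nonneg_left hu₂.le hν
                linarith
        · have hsnd : (μ • x + ν • y).2.2 = μ * x.2.2 + ν * y.2.2 := by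
            simp [smul_eq_mul]
          have hsplit : (∑ i, p i * (μ * t₁ i + ν * t₂ i) * Z i)
              = μ * (∑ i, p i * t₁ i * Z i) + ν * (∑ i, p i * t₂ i * Z i) := by
            rw [Finset.sum_congr rfl (fun i _ => by ring :
              ∀ i ∈ univ, p i * (μ * t₁ i + ν * t₂ i) * Z i
                = μ * (p i * t₁ i * Z i) + ν * (p i * t₂ i * Z i)),
              Finset.sum_add_distrib, ← Finset.mul_sum, ← Finset.mul_sum]
          rw [hsnd, hsplit]
          have ha1 := mul_lt_mul_of_pos_left hv₁ hμ0
          have ha2 := mul_le_mul_of_nonneg_left hv₂.le hν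
          linarith
        · have hmid : (μ • x + ν • y).2.1 = μ * x.2.1 + ν * y.2.1 := by
            simp [smul_eq_mul]
          have hsplit : (∑ i, p i * (μ * t₁ i + ν * t₂ i))
              = μ * (∑ i, p i * t₁ i) + ν * (∑ i, p i * t₂ i) := by
            rw [Finset.sum_congr rfl (fun i _ => by ring :
              ∀ i ∈ univ, p i * (μ * t₁ i + ν * t₂ i)
                = μ * (p i * t₁ i) + ν * (p i * t₂ i)),
              Finset.sum_add_distrib, ← Finset.mul_sum, ← Finset.mul_sum]
          rw [hmid, hsplit, hw₁, hw₂]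
    -- the separated point is not in Bh
    have hx0 : ((ρ, 1, V + ε / 2) : ℝ × ℝ × ℝ) ∉ Bh := by
      rintro ⟨t, ht, h1, h2, h3⟩
      simp only at h1 h2 h3
      have hmem : (∑ i, p i * t i * Z i) ∈ Pset := by
        refine ⟨fun i => p i * t i, fun i => (mul_pos (hp i) (ht i)).le, h3, ?_, rfl⟩
        have he : ∀ i ∈ univ, p i * f (p i * t i / p i) = p i * f (t i) := by
          intro i _
          congr 2
          rw [mul_comm (p i) (t i), mul_div_assoc, div_self (hp i).ne', mul_one]
        rw [Finset.sum_congr rfl he]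
        exact h1.le
      have := le_csSup hPbdd hmem
      rw [← hV] at this
      linarith
    obtain ⟨ℓ, hℓ⟩ := geometric_hahn_banach_open_point hconv hopen hx0
    set a := ℓ (1, 0, 0) with ha_def
    set b := ℓ (0, 1, 0) with hb_def
    set c := ℓ (0, 0, 1) with hc_def
    have hlin : ∀ u w v : ℝ, ℓ (u, w, v) = u * a + w * b + v * c := by
      intro u w v
      have hx : ((u, w, v) : ℝ × ℝ × ℝ)
          = u • ((1:ℝ), (0:ℝ), (0:ℝ)) + w • ((0:ℝ), (1:ℝ), (0:ℝ))
            + v • ((0:ℝ), (0:ℝ), (1:ℝ)) := by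
        simp [Prod.ext_iff]
      rw [hx, map_add, map_add, map_smul, map_smul, map_smul, smul_eq_mul, smul_eq_mul,
        smul_eq_mul]
    set K := ρ * a + 1 * b + (V + ε / 2) * c with hK_def
    have hsep : ∀ u w v : ℝ, ((u, w, v) : ℝ × ℝ × ℝ) ∈ Bh → u * a + w * b + v * c < K := by
      intro u w v h
      have h1 := hℓ _ h
      rwa [hlin, hlin] at h1
    have hmemB : ∀ (t : α → ℝ), (∀ i, 0 < t i) → ∀ u v : ℝ,
        (∑ i, p i * f (t i)) < u → v < (∑ i, p i * t i * Z i) →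
        ((u, ∑ i, p i * t i, v) : ℝ × ℝ × ℝ) ∈ Bh :=
      fun t ht u v h1 h2 => ⟨t, ht, h1, h2, rfl⟩
    -- the key linear inequality for all nonnegative t
    have hdag : ∀ t : α → ℝ, (∀ i, 0 ≤ t i) →
        (∑ i, p i * f (t i)) * a + (∑ i, p i * t i) * b + (∑ i, p i * t i * Z i) * c ≤ K := by
      intro t ht
      apply aux_delta (B := (1 - ∑ i, p i * f (t i)) * a + (1 - ∑ i, p i * t i) * b
        + ((∑ i, p i * Z i) - (∑ i, p i * t i * Z i) - 1) * c)
      intro δ hδ hδ1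
      have htδ : ∀ i, 0 < (1 - δ) * t i + δ := fun i => by nlinarith [ht i]
      have hDδ : (∑ i, p i * f ((1 - δ) * t i + δ)) ≤ (1 - δ) * (∑ i, p i * f (t i)) := by
        have hterm : ∀ i ∈ univ, p i * f ((1 - δ) * t i + δ)
            ≤ p i * ((1 - δ) * f (t i) + δ * f 1) := by
          intro i _
          have hcvx := hf.2 (Set.mem_Ici.mpr (ht i)) (Set.mem_Ici.mpr zero_le_one)
            (by linarith : (0:ℝ) ≤ 1 - δ) hδ.le (by ring)
          simp only [smul_eq_mul, mul_one] at hcvx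
          exact mul_le_mul_of_nonneg_left hcvx (hp i).le
        calc (∑ i, p i * f ((1 - δ) * t i + δ))
            ≤ ∑ i, p i * ((1 - δ) * f (t i) + δ * f 1) := Finset.sum_le_sum hterm
          _ = (1 - δ) * (∑ i, p i * f (t i)) := by
              rw [hf1]
              rw [Finset.sum_congr rfl (fun i _ => by ring :
                ∀ i ∈ univ, p i * ((1 - δ) * f (t i) + δ * 0) = (1 - δ) * (p i * f (t i)))]
              rw [← Finset.mul_sum]
      have hWδ : (∑ i, p i * ((1 - δ) * t i + δ)) = (1 - δ) * (∑ i, p i * t i) + δ := by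
        rw [Finset.sum_congr rfl (fun i _ => by ring :
          ∀ i ∈ univ, p i * ((1 - δ) * t i + δ) = (1 - δ) * (p i * t i) + δ * p i),
          Finset.sum_add_distrib, ← Finset.mul_sum, ← Finset.mul_sum, hp1, mul_one]
      have hSδ : (∑ i, p i * ((1 - δ) * t i + δ) * Z i)
          = (1 - δ) * (∑ i, p i * t i * Z i) + δ * (∑ i, p i * Z i) := by
        rw [Finset.sum_congr rfl (fun i _ => by ring :
          ∀ i ∈ univ, p i * ((1 - δ) * t i + δ) * Z i
            = (1 - δ) * (p i * t i * Z i) + δ * (p i * Z i)),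
          Finset.sum_add_distrib, ← Finset.mul_sum, ← Finset.mul_sum]
      have hmem := hmemB (fun i => (1 - δ) * t i + δ) htδ
        ((1 - δ) * (∑ i, p i * f (t i)) + δ)
        ((1 - δ) * (∑ i, p i * t i * Z i) + δ * (∑ i, p i * Z i) - δ)
        (by linarith) (by rw [hSδ]; linarith)
      rw [hWδ] at hmem
      have hs := hsep _ _ _ hmem
      have hexp : ((1 - δ) * (∑ i, p i * f (t i)) + δ) * a
          + ((1 - δ) * (∑ i, p i * t i) + δ) * b
          + ((1 - δ) * (∑ i, p i * t i * Z i) + δ * (∑ i, p i * Z i) - δ) * c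
          = ((∑ i, p i * f (t i)) * a + (∑ i, p i * t i) * b + (∑ i, p i * t i * Z i) * c)
            + δ * ((1 - ∑ i, p i * f (t i)) * a + (1 - ∑ i, p i * t i) * b
              + ((∑ i, p i * Z i) - (∑ i, p i * t i * Z i) - 1) * c) := by ring
      rw [hexp] at hs
      linarith
    -- sign analysis
    have hBone : ∀ u v : ℝ, 0 < u → v < (∑ i, p i * Z i) →
        ((u, 1, v) : ℝ × ℝ × ℝ) ∈ Bh := by
      intro u v hu hv
      have h1 : (∑ i, p i * f ((fun _ : α => (1:ℝ)) i)) < u := by simpa [hf1] using hu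
      have h2 : v < ∑ i, p i * (fun _ : α => (1:ℝ)) i * Z i := by simpa using hv
      have := hmemB (fun _ => 1) (fun _ => one_pos) u v h1 h2
      simpa [hp1] using this
    have ha_np : a ≤ 0 := by
      by_contra hcon
      push_neg at hcon
      set M := max 1 ((K - b - ((∑ i, p i * Z i) - 1) * c + 1) / a) with hM_def
      have hM : 0 < M := lt_of_lt_of_le one_pos (le_max_left _ _)
      have hmem := hBone M ((∑ i, p i * Z i) - 1) hM (by linarith)
      have hs := hsep _ _ _ hmem
      have hMa : K - b - ((∑ i, p i * Z i) - 1) * c + 1 ≤ M * a := by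
        have h1 : (K - b - ((∑ i, p i * Z i) - 1) * c + 1) / a * a
            = K - b - ((∑ i, p i * Z i) - 1) * c + 1 := div_mul_cancel₀ _ hcon.ne'
        calc K - b - ((∑ i, p i * Z i) - 1) * c + 1
            = (K - b - ((∑ i, p i * Z i) - 1) * c + 1) / a * a := h1.symm
          _ ≤ M * a := mul_le_mul_of_nonneg_right (le_max_right _ _) hcon.le
      linarith
    have hc_nn : 0 ≤ c := by
      by_contra hcon
      push_neg at hcon
      set M := max 1 ((K - a - b - (∑ i, p i * Z i) * c + 1) / (-c)) with hM_def
      have hM : 0 < M := lt_of_lt_of_le one_pos (le_max_left _ _)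
      have hmem := hBone 1 ((∑ i, p i * Z i) - M) one_pos (by linarith)
      have hs := hsep _ _ _ hmem
      have hnc : 0 < -c := by linarith
      have hMc : K - a - b - (∑ i, p i * Z i) * c + 1 ≤ M * (-c) := by
        have h1 : (K - a - b - (∑ i, p i * Z i) * c + 1) / (-c) * (-c)
            = K - a - b - (∑ i, p i * Z i) * c + 1 := div_mul_cancel₀ _ hnc.ne'
        calc K - a - b - (∑ i, p i * Z i) * c + 1
            = (K - a - b - (∑ i, p i * Z i) * c + 1) / (-c) * (-c) := h1.symm
          _ ≤ M * (-c) := mul_le_mul_of_nonneg_right (le_max_right _ _) hnc.le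
      nlinarith
    have hc_pos : 0 < c := by
      rcases hc_nn.lt_or_eq with hcl | hcl
      · exact hcl
      · exfalso
        have hc0 : c = 0 := hcl.symm
        have e1 : (∑ i : α, p i * f 1) = 0 := by simp [hf1]
        have e2 : (∑ i : α, p i * 1) = 1 := by simp [hp1]
        have hd1 := hdag (fun _ => 1) (fun _ => zero_le_one)
        rw [e1, e2, hK_def, hc0] at hd1
        have ha0 : a = 0 := by
          have h0a : 0 ≤ ρ * a := by linarith
          have hra : ρ * a ≤ 0 := mul_nonpos_iff.mpr (Or.inl ⟨hρ.le, ha_np⟩)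
          have hz : ρ * a = 0 := le_antisymm hra h0a
          rcases mul_eq_zero.mp hz with h' | h'
          · exact absurd h' hρ.ne'
          · exact h'
        have f2 : (∑ i : α, p i * 0) = 0 := by simp
        have f3 : (∑ i : α, p i * 0 * Z i) = 0 := by simp
        have hd0 := hdag (fun _ => 0) (fun _ => le_refl 0)
        rw [f2, f3, hK_def, hc0, ha0] at hd0
        have g2 : (∑ i : α, p i * 2) = 2 := by
          rw [Finset.sum_congr rfl (fun i _ => by ring : ∀ i ∈ univ, p i * 2 = 2 * p i),
            ← Finset.mul_sum, hp1, mul_one]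
        have hd2 := hdag (fun _ => 2) (fun _ => by norm_num)
        rw [g2, hK_def, hc0, ha0] at hd2
        have hb0 : b = 0 := by linarith
        have hBmem := hBone 1 ((∑ i, p i * Z i) - 1) one_pos (by linarith)
        have hs := hsep _ _ _ hBmem
        rw [hK_def, ha0, hb0, hc0] at hs
        simp at hs
    -- the multipliers
    set lam := -a / c with hlam_def
    set eta := -b / c with heta_def
    have hlam_nn : 0 ≤ lam := div_nonneg (neg_nonneg.mpr ha_np) hc_pos.le
    have hstar : ∀ t : α → ℝ, (∀ i, 0 ≤ t i) →
        (∑ i, p i * t i * Z i) ≤ lam * (∑ i, p i * f (t i)) + eta * (∑ i, p i * t i)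
          + (-lam * ρ - eta + V + ε / 2) := by
      intro t ht
      have hd := hdag t ht
      have hexp : lam * (∑ i, p i * f (t i)) + eta * (∑ i, p i * t i)
          + (-lam * ρ - eta + V + ε / 2) - (∑ i, p i * t i * Z i)
          = (K - ((∑ i, p i * f (t i)) * a + (∑ i, p i * t i) * b
              + (∑ i, p i * t i * Z i) * c)) / c := by
        rw [hlam_def, heta_def, hK_def]
        field_simp [hc_pos.ne']
        ring
      have h2 : 0 ≤ (K - ((∑ i, p i * f (t i)) * a + (∑ i, p i * t i) * b
          + (∑ i, p i * t i * Z i) * c)) / c := div_nonneg (by linarith) hc_pos.le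
      rw [← hexp] at h2
      linarith
    rcases hlam_nn.lt_or_eq with hlam | hlam
    · -- lam > 0
      refine ⟨lam * (∑ x, p x * g ((Z x - eta) / lam)) + lam * ρ + eta,
        ⟨lam, eta, hlam, rfl⟩, ?_⟩
      have hmain : lam * (∑ x, p x * g ((Z x - eta) / lam)) ≤ -lam * ρ - eta + V + ε / 2 := by
        refine le_of_forall_pos_le_add fun ε' hε' => ?_
        set δ := ε' / lam with hδ_def
        have hδ : 0 < δ := div_pos hε' hlam
        have hchoice : ∀ i : α, ∃ t : ℝ, 0 ≤ t ∧
            g ((Z i - eta) / lam) - δ < (Z i - eta) / lam * t - f t := by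
          intro i
          have hlt : g ((Z i - eta) / lam) - δ < g ((Z i - eta) / lam) := by linarith
          obtain ⟨y, ⟨t, ht, rfl⟩, hy⟩ := (lt_isLUB_iff (hg _)).mp hlt
          exact ⟨t, ht, hy⟩
        choose t ht hgt using hchoice
        have hsum1 : (∑ i, p i * g ((Z i - eta) / lam))
            ≤ (∑ i, p i * ((Z i - eta) / lam * t i - f (t i))) + δ := by
          have hterm : ∀ i ∈ univ, p i * g ((Z i - eta) / lam)
              ≤ p i * ((Z i - eta) / lam * t i - f (t i) + δ) :=
            fun i _ => mul_le_mul_of_nonneg_left (by linarith [hgt i]) (hp i).le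
          calc (∑ i, p i * g ((Z i - eta) / lam))
              ≤ ∑ i, p i * ((Z i - eta) / lam * t i - f (t i) + δ) := Finset.sum_le_sum hterm
            _ = (∑ i, p i * ((Z i - eta) / lam * t i - f (t i))) + δ * (∑ i, p i) := by
                rw [Finset.sum_congr rfl (fun i _ => by ring :
                  ∀ i ∈ univ, p i * ((Z i - eta) / lam * t i - f (t i) + δ)
                    = p i * ((Z i - eta) / lam * t i - f (t i)) + δ * p i),
                  Finset.sum_add_distrib, ← Finset.mul_sum]
            _ = (∑ i, p i * ((Z i - eta) / lam * t i - f (t i))) + δ := by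
                rw [hp1, mul_one]
        have hsum2 : lam * (∑ i, p i * ((Z i - eta) / lam * t i - f (t i)))
            = (∑ i, p i * t i * Z i) - eta * (∑ i, p i * t i)
              - lam * (∑ i, p i * f (t i)) := by
          rw [Finset.mul_sum]
          rw [Finset.sum_congr rfl (fun i _ => by
            field_simp [hlam.ne'] :
            ∀ i ∈ univ, lam * (p i * ((Z i - eta) / lam * t i - f (t i)))
              = p i * t i * Z i - eta * (p i * t i) - lam * (p i * f (t i)))]
          rw [Finset.sum_sub_distrib, Finset.sum_sub_distrib, ← Finset.mul_sum,
            ← Finset.mul_sum]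
        have hst := hstar t ht
        have h5 := mul_le_mul_of_nonneg_left hsum1 hlam.le
        have h5' : lam * ((∑ i, p i * ((Z i - eta) / lam * t i - f (t i))) + δ)
            = lam * (∑ i, p i * ((Z i - eta) / lam * t i - f (t i))) + lam * δ :=
          mul_add _ _ _
        have hlamδ : lam * δ = ε' := by
          rw [hδ_def]
          field_simp
        rw [h5', hlamδ, hsum2] at h5
        linarith
      linarith
    · -- lam = 0
      have hlam0 : lam = 0 := hlam.symm
      have hstar0 : ∀ t : α → ℝ, (∀ i, 0 ≤ t i) →
          (∑ i, p i * t i * Z i) ≤ eta * (∑ i, p i * t i) + (-eta + V + ε / 2) := by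
        intro t ht
        have h := hstar t ht
        rw [hlam0] at h
        linarith [h]
      have hZeta : ∀ i, Z i ≤ eta := by
        intro i
        by_contra hzi
        push_neg at hzi
        have hd : 0 < p i * (Z i - eta) := mul_pos (hp i) (by linarith)
        set M := (|(-eta + V + ε / 2)| + 1) / (p i * (Z i - eta)) with hM_def
        have hM : 0 ≤ M := by positivity
        have ht0 : ∀ j, 0 ≤ (fun j => if j = i then M else 0) j := by
          intro j
          by_cases h : j = i <;> simp [h, hM]
        have h := hstar0 _ ht0
        have he1 : (∑ j, p j * (if j = i then M else 0) * Z j) = p i * M * Z i := by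
          rw [Finset.sum_congr rfl (fun j _ => by
            by_cases hji : j = i
            · subst hji; simp
            · simp [hji] :
            ∀ j ∈ univ, p j * (if j = i then M else 0) * Z j
              = if j = i then p i * M * Z i else 0)]
          simp
        have he2 : (∑ j, p j * (if j = i then M else 0)) = p i * M := by
          rw [Finset.sum_congr rfl (fun j _ => by
            by_cases hji : j = i
            · subst hji; simp
            · simp [hji] :
            ∀ j ∈ univ, p j * (if j = i then M else 0)
              = if j = i then p i * M else 0)]
          simp
        rw [he1, he2] at h
        have hMd : M * (p i * (Z i - eta)) = |(-eta + V + ε / 2)| + 1 :=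
          div_mul_cancel₀ _ hd.ne'
        have habs := le_abs_self (-eta + V + ε / 2)
        nlinarith
      have heta_le : eta ≤ V + ε / 2 := by
        have f2 : (∑ i : α, p i * 0) = 0 := by simp
        have f3 : (∑ i : α, p i * 0 * Z i) = 0 := by simp
        have h := hstar0 (fun _ => 0) (fun _ => le_refl 0)
        rw [f2, f3] at h
        linarith
      have hgρ : 0 < g 0 + ρ := by linarith
      set μ := (ε / 2) / (g 0 + ρ) with hμ_def
      have hμ : 0 < μ := div_pos (by linarith) hgρ
      refine ⟨μ * (∑ x, p x * g ((Z x - eta) / μ)) + μ * ρ + eta,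
        ⟨μ, eta, hμ, rfl⟩, ?_⟩
      have hgb : ∀ x, g ((Z x - eta) / μ) ≤ g 0 := fun x =>
        hgmono _ _ (div_nonpos_of_nonpos_of_nonneg (by linarith [hZeta x]) hμ.le)
      have hsumg : (∑ x, p x * g ((Z x - eta) / μ)) ≤ g 0 := by
        calc (∑ x, p x * g ((Z x - eta) / μ)) ≤ ∑ x, p x * g 0 :=
            Finset.sum_le_sum fun x _ => mul_le_mul_of_nonneg_left (hgb x) (hp x).le
          _ = g 0 := by rw [← Finset.sum_mul, hp1, one_mul]
      have hμval : μ * (g 0 + ρ) = ε / 2 := div_mul_cancel₀ _ hgρ.ne'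
      have h6 := mul_le_mul_of_nonneg_left hsumg hμ.le
      nlinarith
  refine le_antisymm ?_ ?_
  · exact csSup_le hPne fun r hr => le_csInf hDne fun d hd => hweak r hr d hd
  · refine le_of_forall_pos_le_add fun ε hε => ?_
    obtain ⟨d, hd, hdle⟩ := key ε hε
    exact (csInf_le hDbdd hd).trans hdle
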